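/- Let S be a family of k-hypergraphs of dimension d that is simple for {H}, where H is a k-hypergraph of dimension d, and let G ∈ Σ_ℤ(Eqs(S)). Then S is simple for {H + G}. -/

import Mathlib

/-- A hypergraph (of dimension `d`) over the data domain `ℕ`, represented by its
weight function: a finitely supported function from finite sets of data values
(potential hyperedges) to weight vectors in `ℤ^d`.  Isolated vertices are
irrelevant (hypergraphs are identified up to isolated vertices). -/
abbrev HG (d : ℕ) := (Finset ℕ) →₀ (Fin d → ℤ)

/-- `H` is a `k`-hypergraph: every hyperedge (set with nonzero weight) has `k` elements. -/
def IsHG (k : ℕ) {d : ℕ} (H : HG d) : Prop := ∀ e ∈ H.support, e.card = k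

/-- The (non-isolated) vertices of `H`: the union of its hyperedges. -/
def verts {d : ℕ} (H : HG d) : Finset ℕ := H.support.sup id

/-- The weight `w_X(H)` of a finite set `X`: the sum of the weights of all
hyperedges of `H` that contain `X`. -/
def weight {d : ℕ} (X : Finset ℕ) (H : HG d) : Fin d → ℤ :=
  ∑ e ∈ H.support.filter (fun e => X ⊆ e), H e
/-- Two hypergraphs are equivalent if (after discarding isolated vertices) they
differ by a permutation of the data domain. -/
def HGEquiv {d : ℕ} (H₁ H₂ : HG d) : Prop :=
  ∃ π : ℕ ≃ ℕ, ∀ e : Finset ℕ, H₂ (e.image π) = H₁ e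

/-- All hypergraphs equivalent to a member of the family `𝒢`. -/
def Eqs {d : ℕ} (𝒢 : Set (HG d)) : Set (HG d) := {H | ∃ G ∈ 𝒢, HGEquiv G H}

/-- `Σ_ℤ(𝒢)`: all finite `ℤ`-linear combinations of members of `𝒢`. -/
def Zsum {d : ℕ} (𝒢 : Set (HG d)) : Set (HG d) :=
  {H | ∃ (l : ℕ) (c : Fin l → ℤ) (F : Fin l → HG d),
      (∀ i, F i ∈ 𝒢) ∧ H = ∑ i, c i • F i}
/-- `G` is an `(m, a)`-simple `k`-hypergraph:
its vertex set is (contained in) a disjoint union `A ∪ B ∪ C` with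
`A = {α₁, …, α_m}`, `B = {β₁, …, β_m}` and `|C| = 2(k−m) − 1`
(`C = ∅` when `m = k`), such that
`w_X(G) = (−1)^{|B ∩ X|} · a` for every `X = {x₁, …, x_m}` with
`x_i ∈ {α_i, β_i}` for each `i`, `w_X(G) = 0` for every other `m`-element set
`X` of vertices, and `w_X(G) = 0` for every set `X` of vertices with
`|X| < m`. -/
def IsSimple {d : ℕ} (k m : ℕ) (a : Fin d → ℤ) (G : HG d) : Prop :=
  ∃ (A B C : Finset ℕ) (α β : Fin m → ℕ),
    Function.Injective α ∧ Function.Injective β ∧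
    A = Finset.image α Finset.univ ∧ B = Finset.image β Finset.univ ∧
    Disjoint A B ∧ Disjoint A C ∧ Disjoint B C ∧
    C.card = 2 * (k - m) - 1 ∧
    verts G ⊆ A ∪ B ∪ C ∧
    (∀ χ : Fin m → Bool,
      weight (Finset.image (fun i => if χ i then β i else α i) Finset.univ) G
        = ((-1 : ℤ) ^ (Finset.univ.filter (fun i => χ i = true)).card) • a) ∧
    (∀ X : Finset ℕ, X ⊆ A ∪ B ∪ C → X.card = m →
        (∀ χ : Fin m → Bool,
          X ≠ Finset.image (fun i => if χ i then β i else α i) Finset.univ) →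
        weight X G = 0) ∧
    (∀ X : Finset ℕ, X ⊆ A ∪ B ∪ C → X.card < m → weight X G = 0)

/-- `S` is a simplification of the family `𝒢`: for every `0 ≤ m ≤ k` and every
vector `g` in the `ℤ`-span of the weights of `m`-element sets of vertices of
members of `𝒢`, the family `S` contains an `(m, g)`-simple `k`-hypergraph. -/
def IsSimplificationOf {d : ℕ} (k : ℕ) (S 𝒢 : Set (HG d)) : Prop :=
  ∀ m : ℕ, m ≤ k →
    ∀ g ∈ Submodule.span ℤ
      {w : Fin d → ℤ | ∃ G ∈ 𝒢, ∃ X : Finset ℕ,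
        X ⊆ verts G ∧ X.card = m ∧ w = weight X G},
      ∃ G' ∈ S, IsSimple k m g G'

/-- `S` is self-simplified: `S` is a simplification of `S` itself. -/
def SelfSimplified {d : ℕ} (k : ℕ) (S : Set (HG d)) : Prop :=
  IsSimplificationOf k S S

/-- `S` is simple for `𝒢`: `S` is self-simplified and a simplification of `𝒢`. -/
def SimpleFor {d : ℕ} (k : ℕ) (S 𝒢 : Set (HG d)) : Prop :=
  SelfSimplified k S ∧ IsSimplificationOf k S 𝒢

lemma weight_eq_sum {d : ℕ} (X : Finset ℕ) (K : HG d) (T : Finset (Finset ℕ))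
    (hT : K.support ⊆ T) :
    weight X K = ∑ e ∈ T.filter (fun e => X ⊆ e), K e := by
  unfold weight
  refine Finset.sum_subset (Finset.filter_subset_filter _ hT) ?_
  intro e he hne
  rcases Finset.mem_filter.mp he with ⟨_, hXe⟩
  by_contra h
  exact hne (Finset.mem_filter.mpr ⟨Finsupp.mem_support_iff.mpr h, hXe⟩)

lemma weight_add {d : ℕ} (X : Finset ℕ) (H G : HG d) :
    weight X (H + G) = weight X H + weight X G := by
  classical
  set T := H.support ∪ G.support ∪ (H + G).support with hT
  rw [weight_eq_sum X (H + G) T (by intro e he; simp [hT, he]),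
      weight_eq_sum X H T (by intro e he; simp [hT, he]),
      weight_eq_sum X G T (by intro e he; simp [hT, he]),
      ← Finset.sum_add_distrib]
  exact Finset.sum_congr rfl fun e _ => by simp

lemma weight_smul {d : ℕ} (X : Finset ℕ) (c : ℤ) (K : HG d) :
    weight X (c • K) = c • weight X K := by
  rw [weight_eq_sum X (c • K) K.support Finsupp.support_smul, weight, Finset.smul_sum]
  exact Finset.sum_congr rfl fun e _ => by simp

lemma weight_finsum {d : ℕ} {ι : Type*} (X : Finset ℕ) (s : Finset ι) (F : ι → HG d) :
    weight X (∑ i ∈ s, F i) = ∑ i ∈ s, weight X (F i) := by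
  classical
  induction s using Finset.cons_induction with
  | empty => simp [weight]
  | cons a s ha ih => rw [Finset.sum_cons, Finset.sum_cons, weight_add, ih]

lemma subset_verts_of_weight_ne {d : ℕ} {X : Finset ℕ} {K : HG d}
    (h : weight X K ≠ 0) : X ⊆ verts K := by
  have hne : (K.support.filter (fun e => X ⊆ e)).Nonempty := by
    by_contra hne
    rw [Finset.not_nonempty_iff_eq_empty] at hne
    exact h (by rw [weight, hne, Finset.sum_empty])
  obtain ⟨e, he⟩ := hne
  rcases Finset.mem_filter.mp he with ⟨hsupp, hXe⟩
  exact hXe.trans (Finset.le_sup (f := id) hsupp)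

lemma weight_mem_span {d : ℕ} (𝒢 : Set (HG d)) {F : HG d} (hF : F ∈ 𝒢)
    {X : Finset ℕ} {m : ℕ} (hX : X.card = m) :
    weight X F ∈ Submodule.span ℤ
      {w : Fin d → ℤ | ∃ G ∈ 𝒢, ∃ X : Finset ℕ,
        X ⊆ verts G ∧ X.card = m ∧ w = weight X G} := by
  by_cases h : weight X F = 0
  · rw [h]; exact Submodule.zero_mem _
  · exact Submodule.subset_span ⟨F, hF, X, subset_verts_of_weight_ne h, hX, rfl⟩

lemma image_symm_image (π : ℕ ≃ ℕ) (e : Finset ℕ) :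
    (e.image π.symm).image π = e := by
  rw [Finset.image_image]
  simp

lemma image_image_symm (π : ℕ ≃ ℕ) (e : Finset ℕ) :
    (e.image π).image π.symm = e := by
  rw [Finset.image_image]
  simp

lemma weight_of_equiv {d : ℕ} (π : ℕ ≃ ℕ) (F₀ F : HG d)
    (h : ∀ e : Finset ℕ, F (e.image π) = F₀ e) (X : Finset ℕ) :
    weight X F = weight (X.image π.symm) F₀ := by
  unfold weight
  refine Finset.sum_nbij' (fun e => e.image π.symm) (fun e => e.image π) ?_ ?_ ?_ ?_ ?_
  · intro e he
    rcases Finset.mem_filter.mp he with ⟨hs, hXe⟩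
    refine Finset.mem_filter.mpr ⟨Finsupp.mem_support_iff.mpr ?_, Finset.image_subset_image hXe⟩
    rw [← h (e.image π.symm), image_symm_image]
    exact Finsupp.mem_support_iff.mp hs
  · intro e he
    rcases Finset.mem_filter.mp he with ⟨hs, hXe⟩
    refine Finset.mem_filter.mpr ⟨Finsupp.mem_support_iff.mpr ?_, ?_⟩
    · rw [h e]; exact Finsupp.mem_support_iff.mp hs
    · calc X = (X.image π.symm).image π := (image_symm_image π X).symm
        _ ⊆ e.image π := Finset.image_subset_image hXe
  · intro e _; exact image_symm_image π e
  · intro e _; exact image_image_symm π e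
  · intro e _
    rw [← h (e.image π.symm), image_symm_image]

/-- **Lemma.** If the family `S` of `k`-hypergraphs is simple for `{H}` and
`G ∈ Σ_ℤ(Eqs(S))`, then `S` is simple for `{H + G}`. -/
theorem simpleFor_add
    (k d : ℕ) (hk : 1 ≤ k) (hd : 1 ≤ d)
    (S : Set (HG d)) (hSk : ∀ F ∈ S, IsHG k F)
    (H : HG d) (hH : IsHG k H) (hSH : SimpleFor k S {H})
    (G : HG d) (hG : G ∈ Zsum (Eqs S)) :
    SimpleFor k S {H + G} := by
  obtain ⟨hself, hsimp⟩ := hSH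
  refine ⟨hself, ?_⟩
  intro m hm g hg
  refine hself m hm g ?_
  refine Submodule.span_le.mpr ?_ hg
  rintro w ⟨G₀, hG₀, X, hXv, hXc, rfl⟩
  rw [Set.mem_singleton_iff] at hG₀
  subst hG₀
  rw [weight_add]
  refine Submodule.add_mem _ ?_ ?_
  · -- weight X H is in the span of S-weights
    have hH1 : weight X H ∈ Submodule.span ℤ
        {w : Fin d → ℤ | ∃ G ∈ ({H} : Set (HG d)), ∃ X : Finset ℕ,
          X ⊆ verts G ∧ X.card = m ∧ w = weight X G} :=
      weight_mem_span {H} rfl hXc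
    obtain ⟨G', hG'S, hGsimple⟩ := hsimp m hm _ hH1
    obtain ⟨A, B, C, α, β, hαinj, _, _, _, _, _, _, _, _, hχ, _, _⟩ := hGsimple
    have hw := hχ (fun _ => false)
    simp only [Bool.false_eq_true, if_false, Finset.filter_false, Finset.card_empty,
      pow_zero, one_smul] at hw
    have hcard : (Finset.image α Finset.univ).card = m := by
      rw [Finset.card_image_of_injective _ hαinj, Finset.card_univ, Fintype.card_fin]
    exact hw ▸ weight_mem_span S hG'S hcard
  · -- weight X G is in the span of S-weights
    obtain ⟨l, c, F, hF, rfl⟩ := hG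
    rw [weight_finsum]
    refine Submodule.sum_mem _ fun i _ => ?_
    rw [weight_smul]
    refine Submodule.smul_mem _ _ ?_
    obtain ⟨F₀, hF₀S, π, hπ⟩ := hF i
    rw [weight_of_equiv π F₀ (F i) hπ X]
    have hcard : (X.image π.symm).card = m := by
      rw [Finset.card_image_of_injective _ π.symm.injective, hXc]
    exact weight_mem_span S hF₀S hcard
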